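/- For probability measures μ, ν on ℝ^d with finite second moments, if T is any monotone map in the sense that ⟨T(x) - T(y), x - y⟩ ≥ 0 for all x, y, and T pushes μ to ν, then for any other map S pushing μ to ν one has ∫ |x - T(x)|² dμ ≤ ∫ |x - S(x)|² dμ when T is the gradient of a convex function. In particular, in dimension 1, if T is nondecreasing and T_#μ = ν, then ∫ |x - T(x)|² dμ = W₂²(μ, ν). -/

import Mathlib

open Filter
open scoped RealInnerProductSpace Topology


open MeasureTheory Set


section Main
variable {E : Type*} [NormedAddCommGroup E] [InnerProductSpace ℝ E]
  [MeasurableSpace E] [BorelSpace E] [SecondCountableTopology E]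

lemma cost_le_of_subgradient (μ ν : Measure E) [IsProbabilityMeasure μ]
    [IsProbabilityMeasure ν]
    (hμ2 : Integrable (fun x => ‖x‖ ^ 2) μ) (hν2 : Integrable (fun x => ‖x‖ ^ 2) ν)
    (u : E → ℝ) (hu : Continuous u)
    (T : E → E) (hT : Measurable T) (hTμ : Measure.map T μ = ν)
    (hsub : ∀ x y, u x + ⟪T x, y - x⟫ ≤ u y)
    (S : E → E) (hS : Measurable S) (hSμ : Measure.map S μ = ν) :
    ∫ x, ‖x - T x‖ ^ 2 ∂μ ≤ ∫ x, ‖x - S x‖ ^ 2 ∂μ := by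
  have hE : Nonempty E := ⟨0⟩
  -- basic integrability
  have hnsq : Continuous (fun x : E => ‖x‖ ^ 2) := continuous_norm.pow 2
  have hmuT2 : Integrable (fun x => ‖T x‖ ^ 2) μ := by
    have h := hν2; rw [← hTμ] at h
    exact (integrable_map_measure hnsq.aestronglyMeasurable hT.aemeasurable).mp h
  have hmuS2 : Integrable (fun x => ‖S x‖ ^ 2) μ := by
    have h := hν2; rw [← hSμ] at h
    exact (integrable_map_measure hnsq.aestronglyMeasurable hS.aemeasurable).mp h
  have hinner_int : ∀ (R : E → E), Measurable R → Integrable (fun x => ‖R x‖ ^ 2) μ →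
      Integrable (fun x => ⟪x, R x⟫) μ := by
    intro R hR hR2
    have hm : AEStronglyMeasurable (fun x => ⟪x, R x⟫) μ :=
      (measurable_id.inner hR).aestronglyMeasurable
    refine (hμ2.add hR2).mono' hm (Eventually.of_forall fun x => ?_)
    have h1 := abs_real_inner_le_norm x (R x)
    have h2 : ‖x‖ * ‖R x‖ ≤ ‖x‖ ^ 2 + ‖R x‖ ^ 2 := by
      nlinarith [sq_nonneg (‖x‖ - ‖R x‖), norm_nonneg x, norm_nonneg (R x)]
    rw [Real.norm_eq_abs]
    exact h1.trans h2
  have hxT_int := hinner_int T hT hmuT2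
  have hxS_int := hinner_int S hS hmuS2
  have hμ1 : Integrable (fun x : E => ‖x‖) μ := by
    refine ((integrable_const (1:ℝ)).add hμ2).mono'
      continuous_norm.aestronglyMeasurable (Eventually.of_forall fun x => ?_)
    simp only [Pi.add_apply]
    rw [Real.norm_eq_abs, abs_of_nonneg (norm_nonneg x)]
    nlinarith [sq_nonneg (‖x‖ - 1)]
  have hu_int : Integrable u μ := by
    refine (((integrable_const |u 0|).add (hμ1.const_mul ‖T 0‖)).add hxT_int.abs).mono'
      hu.aestronglyMeasurable (Eventually.of_forall fun x => ?_)
    have hlow := hsub 0 x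
    have hhigh := hsub x 0
    have h1 : |⟪T 0, x - 0⟫| ≤ ‖T 0‖ * ‖x‖ := by
      simpa using abs_real_inner_le_norm (T 0) (x - 0)
    have h2 : ⟪T x, 0 - x⟫ = -⟪x, T x⟫ := by
      rw [zero_sub, inner_neg_right, real_inner_comm]
    rw [Real.norm_eq_abs]
    rw [h2] at hhigh
    rw [abs_le]
    constructor
    · have := neg_abs_le ⟪T 0, x - 0⟫
      have h3 := abs_nonneg ⟪x, T x⟫
      simp only [Pi.add_apply]
      cases' abs_cases ⟪T 0, x - 0⟫ with hc hc <;> nlinarith [abs_le.mp (le_refl |u 0|), le_abs_self (u 0), neg_abs_le (u 0)]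
    · simp only [Pi.add_apply]
      nlinarith [le_abs_self ⟪x, T x⟫, le_abs_self (u 0), h1, abs_nonneg ⟪T 0, x - 0⟫]
  -- the conjugate-type function
  set Ψ : E → EReal := fun y => ⨆ z : E, ((⟪z, y⟫ - u z : ℝ) : EReal) with hΨdef
  obtain ⟨zs, hzs⟩ : ∃ zs : ℕ → E, DenseRange zs :=
    ⟨TopologicalSpace.denseSeq E, TopologicalSpace.denseRange_denseSeq E⟩
  have hfc : ∀ y : E, Continuous fun z : E => ((⟪z, y⟫ - u z : ℝ) : EReal) := fun y =>
    continuous_coe_real_ereal.comp ((continuous_id.inner continuous_const).sub hu)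
  have hΨseq : Ψ = fun y => ⨆ n : ℕ, ((⟪zs n, y⟫ - u (zs n) : ℝ) : EReal) := by
    funext y
    apply le_antisymm
    · refine iSup_le fun z => ?_
      obtain ⟨w, hw_mem, hw_lim⟩ := mem_closure_iff_seq_limit.mp (hzs z)
      have hcont : Tendsto (fun n => ((⟪w n, y⟫ - u (w n) : ℝ) : EReal)) atTop
          (𝓝 ((⟪z, y⟫ - u z : ℝ) : EReal)) := ((hfc y).tendsto z).comp hw_lim
      refine le_of_tendsto hcont (Eventually.of_forall fun n => ?_)
      obtain ⟨m, hm⟩ := hw_mem n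
      rw [← hm]
      exact le_iSup (fun k => ((⟪zs k, y⟫ - u (zs k) : ℝ) : EReal)) m
    · exact iSup_le fun n => le_iSup (fun z : E => ((⟪z, y⟫ - u z : ℝ) : EReal)) (zs n)
  have hΨmeas : Measurable Ψ := by
    rw [hΨseq]
    exact Measurable.iSup fun n => (continuous_coe_real_ereal.comp
      ((continuous_const.inner continuous_id).sub continuous_const)).measurable
  have hΨT : ∀ x, Ψ (T x) = ((⟪x, T x⟫ - u x : ℝ) : EReal) := by
    intro x
    apply le_antisymm
    · refine iSup_le fun z => ?_
      rw [EReal.coe_le_coe_iff]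
      have h := hsub x z
      have h2 : ⟪T x, z - x⟫ = ⟪z, T x⟫ - ⟪x, T x⟫ := by
        rw [inner_sub_right, real_inner_comm (T x) z, real_inner_comm (T x) x]
      linarith
    · exact le_iSup (fun z : E => ((⟪z, T x⟫ - u z : ℝ) : EReal)) x
  have hΨS : ∀ x, ((⟪x, S x⟫ - u x : ℝ) : EReal) ≤ Ψ (S x) := fun x =>
    le_iSup (fun z : E => ((⟪z, S x⟫ - u z : ℝ) : EReal)) x
  set D : Set E := {y | Ψ y ≠ ⊤} with hDdef
  have hDmeas : MeasurableSet D := (hΨmeas (measurableSet_singleton ⊤)).compl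
  have hνD : ν Dᶜ = 0 := by
    have hpre : T ⁻¹' Dᶜ = ∅ := by
      ext x
      simp only [mem_preimage, mem_compl_iff, hDdef, mem_setOf_eq, not_not, mem_empty_iff_false,
        iff_false]
      rw [hΨT x]
      exact EReal.coe_ne_top _
    rw [← hTμ, Measure.map_apply hT hDmeas.compl, hpre, measure_empty]
  have hSD : ∀ᵐ x ∂μ, S x ∈ D := by
    have h : μ (S ⁻¹' Dᶜ) = 0 := by
      rw [← Measure.map_apply hS hDmeas.compl, hSμ]; exact hνD
    rw [ae_iff]
    exact measure_mono_null (fun x hx => hx) h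
  set ψ : E → ℝ := fun y => (Ψ y).toReal with hψdef
  have hψmeas : Measurable ψ := hΨmeas.ereal_toReal
  have hψT : ∀ x, ψ (T x) = ⟪x, T x⟫ - u x := fun x => by
    rw [hψdef]; simp only [hΨT x, EReal.toReal_coe]
  have hψS : ∀ x, S x ∈ D → ⟪x, S x⟫ - u x ≤ ψ (S x) := by
    intro x hx
    have h1 := hΨS x
    have h2 := EReal.toReal_le_toReal h1 (EReal.coe_ne_bot _) hx
    rwa [EReal.toReal_coe] at h2
  have hψT_int : Integrable (fun x => ψ (T x)) μ := by
    have : (fun x => ψ (T x)) = fun x => ⟪x, T x⟫ - u x := funext hψT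
    rw [this]; exact hxT_int.sub hu_int
  have hψν_int : Integrable ψ ν := by
    rw [← hTμ]
    exact (integrable_map_measure hψmeas.aestronglyMeasurable hT.aemeasurable).mpr hψT_int
  have hψS_int : Integrable (fun x => ψ (S x)) μ := by
    have h := hψν_int; rw [← hSμ] at h
    exact (integrable_map_measure hψmeas.aestronglyMeasurable hS.aemeasurable).mp h
  have hint_eq : ∫ x, ψ (S x) ∂μ = ∫ x, ψ (T x) ∂μ := by
    have e1 : ∫ x, ψ (S x) ∂μ = ∫ y, ψ y ∂ν := by
      rw [← hSμ, integral_map hS.aemeasurable]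
      · rw [hSμ]; exact hψmeas.aestronglyMeasurable
    have e2 : ∫ x, ψ (T x) ∂μ = ∫ y, ψ y ∂ν := by
      rw [← hTμ, integral_map hT.aemeasurable]
      · rw [hTμ]; exact hψmeas.aestronglyMeasurable
    rw [e1, e2]
  have key : ∫ x, ⟪x, S x⟫ ∂μ ≤ ∫ x, ⟪x, T x⟫ ∂μ := by
    have h1 : ∫ x, (⟪x, S x⟫ - u x) ∂μ ≤ ∫ x, ψ (S x) ∂μ :=
      integral_mono_ae (hxS_int.sub hu_int) hψS_int (hSD.mono fun x hx => hψS x hx)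
    have h2 : ∫ x, (⟪x, T x⟫ - u x) ∂μ = ∫ x, ψ (T x) ∂μ := by
      congr 1; funext x; exact (hψT x).symm
    rw [integral_sub hxS_int hu_int] at h1
    rw [integral_sub hxT_int hu_int] at h2
    linarith [hint_eq]
  have hTSnorm : ∫ x, ‖T x‖ ^ 2 ∂μ = ∫ x, ‖S x‖ ^ 2 ∂μ := by
    have e1 : ∫ x, ‖T x‖ ^ 2 ∂μ = ∫ y, ‖y‖ ^ 2 ∂ν := by
      rw [← hTμ, integral_map hT.aemeasurable hnsq.aestronglyMeasurable]
    have e2 : ∫ x, ‖S x‖ ^ 2 ∂μ = ∫ y, ‖y‖ ^ 2 ∂ν := by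
      rw [← hSμ, integral_map hS.aemeasurable hnsq.aestronglyMeasurable]
    rw [e1, e2]
  have expand : ∀ R : E → E, Integrable (fun x => ‖R x‖ ^ 2) μ →
      Integrable (fun x => ⟪x, R x⟫) μ →
      ∫ x, ‖x - R x‖ ^ 2 ∂μ = ∫ x, ‖x‖ ^ 2 ∂μ - 2 * ∫ x, ⟪x, R x⟫ ∂μ + ∫ x, ‖R x‖ ^ 2 ∂μ := by
    intro R hR2 hRi
    have h : (fun x => ‖x - R x‖ ^ 2) = fun x => ‖x‖ ^ 2 - 2 * ⟪x, R x⟫ + ‖R x‖ ^ 2 :=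
      funext fun x => norm_sub_sq_real x (R x)
    have e1 : ∫ x, (‖x‖ ^ 2 - 2 * ⟪x, R x⟫ + ‖R x‖ ^ 2) ∂μ
        = ∫ x, (‖x‖ ^ 2 - 2 * ⟪x, R x⟫) ∂μ + ∫ x, ‖R x‖ ^ 2 ∂μ :=
      integral_add (hμ2.sub (hRi.const_mul 2)) hR2
    have e2 : ∫ x, (‖x‖ ^ 2 - 2 * ⟪x, R x⟫) ∂μ
        = ∫ x, ‖x‖ ^ 2 ∂μ - ∫ x, 2 * ⟪x, R x⟫ ∂μ :=
      integral_sub hμ2 (hRi.const_mul 2)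
    rw [h, e1, e2, integral_const_mul]
  rw [expand T hmuT2 hxT_int, expand S hmuS2 hxS_int, hTSnorm]
  linarith
end Main

section Grad
variable {E : Type*} [NormedAddCommGroup E] [InnerProductSpace ℝ E] [CompleteSpace E]

lemma subgradient_of_convex (u : E → ℝ) (hconv : ConvexOn ℝ Set.univ u)
    (hdiff : Differentiable ℝ u) (x y : E) :
    u x + ⟪gradient u x, y - x⟫ ≤ u y := by
  set g : ℝ → ℝ := fun t => u (t • (y - x) + x) with hg
  have hgconv : ConvexOn ℝ Set.univ g := by
    have := hconv.comp_affineMap (AffineMap.lineMap x y : ℝ →ᵃ[ℝ] E)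
    have he : (u ∘ (AffineMap.lineMap x y : ℝ →ᵃ[ℝ] E)) = g := by
      funext t
      simp only [Function.comp_apply, AffineMap.lineMap_apply_module, hg]
      congr 1
      module
    rw [he] at this
    simpa using this
  have hline : HasDerivAt (fun t : ℝ => t • (y - x) + x) (y - x) 0 := by
    have h1 : HasDerivAt (fun t : ℝ => t • (y - x)) ((1 : ℝ) • (y - x)) 0 :=
      (hasDerivAt_id 0).smul_const (y - x)
    rw [one_smul] at h1
    exact h1.add_const x
  have hgd : HasDerivAt g (fderiv ℝ u x (y - x)) 0 := by
    have := ((hdiff ((0 : ℝ) • (y - x) + x)).hasFDerivAt).comp_hasDerivAt 0 hline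
    simpa [hg, Function.comp_def] using this
  have hslope := hgconv.le_slope_of_hasDerivWithinAt_Ioi (Set.mem_univ (0 : ℝ))
    (Set.mem_univ (1 : ℝ)) one_pos (hgd.hasDerivWithinAt)
  have hslope' : fderiv ℝ u x (y - x) ≤ g 1 - g 0 := by
    rwa [slope_def_field, sub_zero, div_one] at hslope
  have hgrad : fderiv ℝ u x (y - x) = ⟪gradient u x, y - x⟫ := by
    have h1 : HasGradientAt u (gradient u x) x := (hdiff x).hasGradientAt
    have h2 : HasFDerivAt u (InnerProductSpace.toDual ℝ E (gradient u x)) x :=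
      hasGradientAt_iff_hasFDerivAt.mp h1
    rw [h2.fderiv]
    exact InnerProductSpace.toDual_apply_apply
  have hg1 : g 1 = u y := by simp [hg]
  have hg0 : g 0 = u x := by simp [hg]
  rw [hgrad, hg1, hg0] at hslope'
  linarith
end Grad

section OneD

lemma primitive_subgradient (T : ℝ → ℝ) (hmono : Monotone T) (x y : ℝ) :
    (∫ t in (0:ℝ)..x, T t) + T x * (y - x) ≤ ∫ t in (0:ℝ)..y, T t := by
  have hInt : ∀ a b : ℝ, IntervalIntegrable T MeasureTheory.volume a b := fun a b =>
    hmono.intervalIntegrable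
  have hadj : (∫ t in (0:ℝ)..x, T t) + (∫ t in x..y, T t) = ∫ t in (0:ℝ)..y, T t :=
    intervalIntegral.integral_add_adjacent_intervals (hInt 0 x) (hInt x y)
  rcases le_or_gt x y with hxy | hxy
  · have hmon : (∫ t in x..y, (T x)) ≤ ∫ t in x..y, T t :=
      intervalIntegral.integral_mono_on hxy intervalIntegrable_const (hInt x y)
        (fun t ht => hmono ht.1)
    rw [intervalIntegral.integral_const, smul_eq_mul] at hmon
    nlinarith [hmon]
  · have hmon : (∫ t in y..x, T t) ≤ ∫ t in y..x, (T x) :=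
      intervalIntegral.integral_mono_on hxy.le (hInt y x) intervalIntegrable_const
        (fun t ht => hmono ht.2)
    rw [intervalIntegral.integral_const, smul_eq_mul] at hmon
    have hswap : (∫ t in x..y, T t) = -∫ t in y..x, T t :=
      (intervalIntegral.integral_symm y x)
    nlinarith [hmon, hswap, hadj]
end OneD

/-- Squared quadratic Wasserstein distance, defined as the infimum of the
quadratic transport cost over all measurable transport maps. -/
noncomputable def W2sq {E : Type*} [NormedAddCommGroup E] [MeasurableSpace E]
    (μ ν : Measure E) : ℝ :=
  sInf {c | ∃ T : E → E, Measurable T ∧ Measure.map T μ = ν ∧ c = ∫ x, ‖x - T x‖ ^ 2 ∂μ}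

/-- (i) in ℝ^d, a monotone transport map `T` that is the gradient of a
convex function is optimal: its quadratic cost is no larger than that of any other
transport map `S`; (ii) in dimension 1, a nondecreasing transport map realizes
`W₂²(μ, ν)`. -/
theorem gradient_of_convex_is_optimal_and_monotone_1d_optimal :
    (∀ (d : ℕ) (μ ν : Measure (EuclideanSpace ℝ (Fin d)))
        (_ : IsProbabilityMeasure μ) (_ : IsProbabilityMeasure ν)
        (_ : Integrable (fun x => ‖x‖ ^ 2) μ) (_ : Integrable (fun x => ‖x‖ ^ 2) ν)
        (u : EuclideanSpace ℝ (Fin d) → ℝ)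
        (_ : ConvexOn ℝ Set.univ u) (_ : Differentiable ℝ u)
        (T : EuclideanSpace ℝ (Fin d) → EuclideanSpace ℝ (Fin d))
        (_ : T = fun x => gradient u x)
        (_ : ∀ x y, (0 : ℝ) ≤ inner ℝ (T x - T y) (x - y))
        (_ : Measurable T) (_ : Measure.map T μ = ν)
        (S : EuclideanSpace ℝ (Fin d) → EuclideanSpace ℝ (Fin d))
        (_ : Measurable S) (_ : Measure.map S μ = ν),
        ∫ x, ‖x - T x‖ ^ 2 ∂μ ≤ ∫ x, ‖x - S x‖ ^ 2 ∂μ) ∧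
    (∀ (μ ν : Measure ℝ)
        (_ : IsProbabilityMeasure μ) (_ : IsProbabilityMeasure ν)
        (_ : Integrable (fun x => x ^ 2) μ) (_ : Integrable (fun x => x ^ 2) ν)
        (T : ℝ → ℝ) (_ : Monotone T) (_ : Measurable T) (_ : Measure.map T μ = ν),
        ∫ x, ‖x - T x‖ ^ 2 ∂μ = W2sq μ ν) := by
  constructor
  · intro d μ ν hμp hνp hμ2 hν2 u hconv hdiff T hTgrad hmono hTmeas hTμ S hSmeas hSμ
    have hsub : ∀ x y, u x + ⟪T x, y - x⟫ ≤ u y := by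
      intro x y
      rw [hTgrad]
      exact subgradient_of_convex u hconv hdiff x y
    exact cost_le_of_subgradient μ ν hμ2 hν2 u hdiff.continuous T hTmeas hTμ hsub S hSmeas hSμ
  · intro μ ν hμp hνp hμ2 hν2 T hmono hTmeas hTμ
    have hμ2' : Integrable (fun x : ℝ => ‖x‖ ^ 2) μ := by
      simpa [Real.norm_eq_abs, sq_abs] using hμ2
    have hν2' : Integrable (fun x : ℝ => ‖x‖ ^ 2) ν := by
      simpa [Real.norm_eq_abs, sq_abs] using hν2
    set u : ℝ → ℝ := fun x => ∫ t in (0:ℝ)..x, T t with hu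
    have hucont : Continuous u :=
      intervalIntegral.continuous_primitive (fun a b => hmono.intervalIntegrable) 0
    have hsub : ∀ x y : ℝ, u x + ⟪T x, y - x⟫ ≤ u y := by
      intro x y
      have : ⟪T x, y - x⟫ = T x * (y - x) := by
        simp [RCLike.inner_apply]; ring
      rw [this]
      exact primitive_subgradient T hmono x y
    have hopt : ∀ S : ℝ → ℝ, Measurable S → Measure.map S μ = ν →
        ∫ x, ‖x - T x‖ ^ 2 ∂μ ≤ ∫ x, ‖x - S x‖ ^ 2 ∂μ := fun S hS hSμ =>
      cost_le_of_subgradient μ ν hμ2' hν2' u hucont T hTmeas hTμ hsub S hS hSμ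
    have hmem : (∫ x, ‖x - T x‖ ^ 2 ∂μ) ∈
        {c | ∃ R : ℝ → ℝ, Measurable R ∧ Measure.map R μ = ν ∧ c = ∫ x, ‖x - R x‖ ^ 2 ∂μ} :=
      ⟨T, hTmeas, hTμ, rfl⟩
    have hlb : ∀ c ∈ {c | ∃ R : ℝ → ℝ, Measurable R ∧ Measure.map R μ = ν ∧
        c = ∫ x, ‖x - R x‖ ^ 2 ∂μ}, (∫ x, ‖x - T x‖ ^ 2 ∂μ) ≤ c := by
      rintro c ⟨R, hR, hRμ, rfl⟩
      exact hopt R hR hRμ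
    exact le_antisymm (le_csInf ⟨_, hmem⟩ hlb) (csInf_le ⟨_, hlb⟩ hmem)
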